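/- Let T be a tree order on an ordinal θ such that every node has only finitely many immediate T-successors and, for every successor ordinal α+1 < θ, the immediate T-predecessor of α+1 lies in [0,α]_T. Suppose b is a cofinal branch of T (a T-linearly ordered, T-downward closed subset, unbounded in θ) where θ is a limit ordinal. Then b is uniquely determined by the following closure properties: (i) if i ∈ b and i has T-successors in θ, then the largest immediate T-successor of i below θ belongs to b; (ii) if λ < θ is a limit ordinal and b ∩ λ is unbounded in λ with cofinally many elements T-below λ, then λ ∈ b. -/

import Mathlib

open Set

/-- A tree order on an ordinal `θ`. -/
structure TreeOrder (θ : Ordinal) (T : Ordinal → Ordinal → Prop) : Prop where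
  lt_of_rel : ∀ {β α : Ordinal}, T β α → β < α
  lt_dom : ∀ {β α : Ordinal}, T β α → α < θ
  zero_rel : ∀ α : Ordinal, 0 < α → α < θ → T 0 α
  rel_trans : ∀ {γ β α : Ordinal}, T γ β → T β α → T γ α
  linear_pred : ∀ {α β γ : Ordinal}, T β α → T γ α → β = γ ∨ T β γ ∨ T γ β
  succ_pred : ∀ α : Ordinal, α + 1 < θ →
    ∃ β, T β (α + 1) ∧ ∀ γ, T γ (α + 1) → γ = β ∨ T γ β
  limit_cofinal : ∀ lam : Ordinal, lam < θ → Order.IsSuccLimit lam →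
    ∀ β < lam, ∃ γ, β ≤ γ ∧ T γ lam

/-- `β` is the immediate `T`-predecessor of `α`. -/
def ImmPred (T : Ordinal → Ordinal → Prop) (β α : Ordinal) : Prop :=
  T β α ∧ ∀ γ, T β γ → T γ α → False

/-- Almost linearity: the immediate predecessor of a successor node `α+1`
lies in `[0,α]_T`, and every node has only finitely many immediate successors. -/
def AlmostLinear (θ : Ordinal) (T : Ordinal → Ordinal → Prop) : Prop :=
  (∀ α : Ordinal, α + 1 < θ → ∀ β, ImmPred T β (α + 1) → β = α ∨ T β α) ∧
  (∀ i : Ordinal, {α : Ordinal | ImmPred T i α}.Finite)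

/-- A cofinal branch of `T` restricted to `lam`. -/
def IsCofinalBranch (lam : Ordinal) (T : Ordinal → Ordinal → Prop)
    (b : Set Ordinal) : Prop :=
  (∀ α ∈ b, α < lam) ∧
  (∀ α ∈ b, ∀ β ∈ b, α = β ∨ T α β ∨ T β α) ∧
  (∀ α ∈ b, ∀ β, T β α → β ∈ b) ∧
  (∀ β < lam, ∃ γ ∈ b, β ≤ γ)

/-- Key bound: if `g < j` are both immediate `T`-successors of `i`, then every
node `T`-above `g` is below `j`. -/
lemma immSucc_bound {θ : Ordinal} {T : Ordinal → Ordinal → Prop}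
    (hT : TreeOrder θ T) (hAL : AlmostLinear θ T)
    {i γ j : Ordinal} (hγ : ImmPred T i γ) (hj : ImmPred T i j) (hγj : γ < j) :
    ∀ ξ, T γ ξ → ξ < j := by
  intro ξ
  induction ξ using Ordinal.induction with
  | h ξ IH =>
    intro hTγξ
    by_contra hge
    push_neg at hge
    have hjξ : j ≠ ξ := by
      rintro rfl
      exact hj.2 γ hγ.1 hTγξ
    have hjlt : j < ξ := lt_of_le_of_ne hge hjξ
    rcases Ordinal.zero_or_succ_or_isSuccLimit ξ with h0 | ⟨α, rfl⟩ | hl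
    · subst h0
      exact absurd hjlt (by simp)
    · rw [← Ordinal.add_one_eq_succ] at hTγξ IH hjlt
      have hαθ : α + 1 < θ := hT.lt_dom hTγξ
      obtain ⟨β, hβ, hβmax⟩ := hT.succ_pred α hαθ
      have hβimm : ImmPred T β (α + 1) := by
        refine ⟨hβ, fun δ h1 h2 => ?_⟩
        rcases hβmax δ h2 with rfl | h3
        · exact absurd (hT.lt_of_rel h1) (lt_irrefl _)
        · exact absurd (hT.lt_of_rel (hT.rel_trans h1 h3)) (lt_irrefl _)
      have hjα : j ≤ α := by
        rw [Ordinal.add_one_eq_succ] at hjlt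
        exact Order.lt_succ_iff.mp hjlt
      have hαξ : α < α + 1 := lt_add_one α
      rcases hAL.1 α hαθ β hβimm with rfl | hβα
      · rcases hβmax γ hTγξ with rfl | hγβ
        · exact absurd hjα (not_le.mpr hγj)
        · exact absurd hjα (not_le.mpr (IH β hαξ hγβ))
      · rcases hβmax γ hTγξ with rfl | hγβ
        · exact absurd hjα (not_le.mpr (IH α hαξ hβα))
        · exact absurd hjα (not_le.mpr (IH α hαξ (hT.rel_trans hγβ hβα)))
    · obtain ⟨η, hηj, hηξ⟩ := hT.limit_cofinal ξ (hT.lt_dom hTγξ) hl j hjlt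
      rcases hT.linear_pred hTγξ hηξ with rfl | h1 | h2
      · exact absurd hηj (not_le.mpr hγj)
      · exact absurd hηj (not_le.mpr (IH η (hT.lt_of_rel hηξ) h1))
      · exact absurd (hT.lt_of_rel h2) (not_lt.mpr (le_of_lt (lt_of_lt_of_le hγj hηj)))

/-- A cofinal branch contains the largest immediate successor of each of its nodes. -/
lemma branch_max_succ {θ : Ordinal} {T : Ordinal → Ordinal → Prop}
    (hT : TreeOrder θ T) (hθ : Order.IsSuccLimit θ) (hAL : AlmostLinear θ T)
    {b : Set Ordinal} (hb : IsCofinalBranch θ T b) {i : Ordinal} (hi : i ∈ b)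
    {j : Ordinal} (hj : ImmPred T i j) (hmax : ∀ j', ImmPred T i j' → j' ≤ j) :
    j ∈ b := by
  obtain ⟨hbd, hlin, hdc, hcof⟩ := hb
  have hiθ : i < θ := hbd i hi
  obtain ⟨δ, hδb, hδge⟩ := hcof (i + 1) (by rw [Ordinal.add_one_eq_succ]; exact hθ.succ_lt hiθ)
  have hiδ : i < δ := lt_of_lt_of_le (lt_add_one i) hδge
  have hTiδ : T i δ := by
    rcases hlin i hi δ hδb with rfl | h | h
    · exact absurd hiδ (lt_irrefl _)
    · exact h
    · exact absurd (hT.lt_of_rel h) (not_lt.mpr (le_of_lt hiδ))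
  have hne : {x | x ∈ b ∧ T i x}.Nonempty := ⟨δ, hδb, hTiδ⟩
  obtain ⟨γ, ⟨hγb, hTiγ⟩, hγmin⟩ := wellFounded_lt.has_min {x | x ∈ b ∧ T i x} hne
  have hγimm : ImmPred T i γ := by
    refine ⟨hTiγ, fun ε h1 h2 => ?_⟩
    exact hγmin ε ⟨hdc γ hγb ε h2, h1⟩ (hT.lt_of_rel h2)
  have hγj : γ ≤ j := hmax γ hγimm
  rcases eq_or_lt_of_le hγj with rfl | hlt
  · exact hγb
  · exfalso
    have hjθ : j < θ := hT.lt_dom hj.1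
    obtain ⟨ε, hεb, hεge⟩ := hcof (j + 1) (by rw [Ordinal.add_one_eq_succ]; exact hθ.succ_lt hjθ)
    have hjε : j < ε := lt_of_lt_of_le (lt_add_one j) hεge
    have hγε : γ < ε := lt_trans hlt hjε
    have hTγε : T γ ε := by
      rcases hlin γ hγb ε hεb with rfl | h | h
      · exact absurd hγε (lt_irrefl _)
      · exact h
      · exact absurd (hT.lt_of_rel h) (not_lt.mpr (le_of_lt hγε))
    exact absurd (immSucc_bound hT hAL hγimm hj hlt ε hTγε) (not_lt.mpr (le_of_lt hjε))

/-- A cofinal branch contains every limit node cofinally approached within it. -/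
lemma branch_limit_mem {θ : Ordinal} {T : Ordinal → Ordinal → Prop}
    (hT : TreeOrder θ T) {b : Set Ordinal} (hb : IsCofinalBranch θ T b)
    {lam : Ordinal} (hlamθ : lam < θ) (hlim : Order.IsSuccLimit lam)
    (h : ∀ η < lam, ∃ β ∈ b, η < β ∧ T β lam) : lam ∈ b := by
  obtain ⟨hbd, hlin, hdc, hcof⟩ := hb
  have hne : {x | x ∈ b ∧ lam ≤ x}.Nonempty := by
    obtain ⟨γ, hγb, hγge⟩ := hcof lam hlamθ
    exact ⟨γ, hγb, hγge⟩
  obtain ⟨γ, ⟨hγb, hγge⟩, hγmin⟩ := wellFounded_lt.has_min {x | x ∈ b ∧ lam ≤ x} hne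
  rcases eq_or_lt_of_le hγge with rfl | hlt
  · exact hγb
  exfalso
  rcases Ordinal.zero_or_succ_or_isSuccLimit γ with h0 | ⟨α, rfl⟩ | hl
  · subst h0; exact absurd hlt (by simp)
  · rw [← Ordinal.add_one_eq_succ] at hγb hγge hγmin hlt
    have hγθ : α + 1 < θ := hbd _ hγb
    obtain ⟨β₀, hβ₀, hβ₀max⟩ := hT.succ_pred α hγθ
    have hβ₀b : β₀ ∈ b := hdc _ hγb β₀ hβ₀
    have hβ₀lam : β₀ < lam := by
      by_contra hge2
      push_neg at hge2
      exact hγmin β₀ ⟨hβ₀b, hge2⟩ (hT.lt_of_rel hβ₀)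
    obtain ⟨β, hβb, hββ₀, hTβlam⟩ := h β₀ hβ₀lam
    have hβγ : β < α + 1 := lt_of_lt_of_le (hT.lt_of_rel hTβlam) hγge
    have hTβγ : T β (α + 1) := by
      rcases hlin β hβb _ hγb with rfl | hh | hh
      · exact absurd hβγ (lt_irrefl _)
      · exact hh
      · exact absurd (hT.lt_of_rel hh) (not_lt.mpr (le_of_lt hβγ))
    rcases hβ₀max β hTβγ with rfl | hh
    · exact absurd hββ₀ (lt_irrefl _)
    · exact absurd (hT.lt_of_rel hh) (not_lt.mpr (le_of_lt hββ₀))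
  · obtain ⟨δ, hδge, hTδγ⟩ := hT.limit_cofinal γ (hbd _ hγb) hl lam hlt
    exact hγmin δ ⟨hdc _ hγb δ hTδγ, hδge⟩ (hT.lt_of_rel hTδγ)

/-- Any two cofinal branches coincide: one is contained in the other. -/
lemma branch_subset {θ : Ordinal} {T : Ordinal → Ordinal → Prop}
    (hT : TreeOrder θ T) (hθ : Order.IsSuccLimit θ) (hAL : AlmostLinear θ T)
    {b b' : Set Ordinal} (hb : IsCofinalBranch θ T b) (hb' : IsCofinalBranch θ T b') :
    b' ⊆ b := by
  have hzero : (0 : Ordinal) ∈ b := by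
    obtain ⟨γ, hγb, hγge⟩ := hb.2.2.2 1
      (by rw [show (1 : Ordinal) = 0 + 1 by simp, Ordinal.add_one_eq_succ]; exact hθ.succ_lt hθ.pos)
    have hpos : (0 : Ordinal) < γ := lt_of_lt_of_le zero_lt_one hγge
    exact hb.2.2.1 γ hγb 0 (hT.zero_rel γ hpos (hb.1 γ hγb))
  intro ξ hξ
  induction ξ using Ordinal.induction with
  | h ξ IH =>
    rcases Ordinal.zero_or_succ_or_isSuccLimit ξ with h0 | ⟨α, rfl⟩ | hl
    · subst h0; exact hzero
    · rw [← Ordinal.add_one_eq_succ] at hξ IH ⊢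
      have hξθ : α + 1 < θ := hb'.1 _ hξ
      obtain ⟨β₀, hβ₀, hβ₀max⟩ := hT.succ_pred α hξθ
      have hβ₀imm : ImmPred T β₀ (α + 1) := by
        refine ⟨hβ₀, fun δ h1 h2 => ?_⟩
        rcases hβ₀max δ h2 with rfl | h3
        · exact absurd (hT.lt_of_rel h1) (lt_irrefl _)
        · exact absurd (hT.lt_of_rel (hT.rel_trans h1 h3)) (lt_irrefl _)
      have hβ₀b' : β₀ ∈ b' := hb'.2.2.1 _ hξ β₀ hβ₀
      have hβ₀b : β₀ ∈ b := IH β₀ (hT.lt_of_rel hβ₀) hβ₀b'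
      have hfin := hAL.2 β₀
      have hne : {α' : Ordinal | ImmPred T β₀ α'}.Nonempty := ⟨α + 1, hβ₀imm⟩
      obtain ⟨j, hjmem, hjmax⟩ : ∃ j ∈ {α' : Ordinal | ImmPred T β₀ α'},
          ∀ j' ∈ {α' : Ordinal | ImmPred T β₀ α'}, id j ≤ id j' → id j = id j' := by
        obtain ⟨j, hj, hm⟩ := Set.exists_max_image _ id hfin hne
        exact ⟨j, hj, fun j' hj' h => le_antisymm h (hm j' hj')⟩
      have hmax : ∀ j', ImmPred T β₀ j' → j' ≤ j := by
        intro j' hj'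
        by_contra hgt
        push_neg at hgt
        exact absurd (hjmax j' hj' (le_of_lt hgt)) (ne_of_lt hgt)
      have hjb : j ∈ b := branch_max_succ hT hθ hAL hb hβ₀b hjmem hmax
      have hjb' : j ∈ b' := branch_max_succ hT hθ hAL hb' hβ₀b' hjmem hmax
      rcases hb'.2.1 _ hξ j hjb' with heq | hh | hh
      · rw [heq]; exact hjb
      · exact absurd hh (fun hh => hjmem.2 _ hβ₀imm.1 hh)
      · exact absurd hh (fun hh => hβ₀imm.2 _ hjmem.1 hh)
    · refine branch_limit_mem hT hb (hb'.1 _ hξ) hl (fun η hη => ?_)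
      obtain ⟨β, hβge, hTβξ⟩ := hT.limit_cofinal ξ (hb'.1 _ hξ) hl (η + 1)
        (by rw [Ordinal.add_one_eq_succ]; exact hl.succ_lt hη)
      have hβb' : β ∈ b' := hb'.2.2.1 _ hξ β hTβξ
      exact ⟨β, IH β (hT.lt_of_rel hTβξ) hβb', lt_of_lt_of_le (lt_add_one η) hβge, hTβξ⟩

/-- a cofinal branch through an almost linear tree order on a
limit ordinal `θ` satisfies the two closure properties (largest immediate
successor; limits of cofinally-`T`-below sequences) and is uniquely
determined: any cofinal branch coincides with it. -/

theorem cofinal_branch_determined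
    (θ : Ordinal) (T : Ordinal → Ordinal → Prop) (hT : TreeOrder θ T)
    (hθ : Order.IsSuccLimit θ) (hAL : AlmostLinear θ T)
    (b : Set Ordinal) (hb : IsCofinalBranch θ T b) :
    ((∀ i ∈ b, ∀ j, ImmPred T i j → j < θ →
        (∀ j', ImmPred T i j' → j' < θ → j' ≤ j) → j ∈ b) ∧
     (∀ lam, lam < θ → Order.IsSuccLimit lam →
        (∀ η < lam, ∃ β ∈ b, η < β ∧ T β lam) → lam ∈ b)) ∧
    ∀ b' : Set Ordinal, IsCofinalBranch θ T b' → b' = b := by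
  refine ⟨⟨fun i hi j hj _ hmax => branch_max_succ hT hθ hAL hb hi hj
      (fun j' hj' => hmax j' hj' (hT.lt_dom hj'.1)),
    fun lam hlam hlim h => branch_limit_mem hT hb hlam hlim h⟩, fun b' hb' => ?_⟩
  exact Set.Subset.antisymm (branch_subset hT hθ hAL hb hb') (branch_subset hT hθ hAL hb' hb)
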